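/- Let t₀ > 2 and let x : [t₀−1, ∞) → ℝ be a continuous function, differentiable on [t₀, ∞) (with right derivative at t₀), satisfying x'(t) = ∫_0^1 x(t−θ)/(t−θ) dθ for all t ≥ t₀. Then the limit lim_{t→∞} x(t)/t exists, the derivative of t ↦ x(t)/t tends to 0 as t → ∞, and lim_{t→∞} x'(t)/t = 0. -/

import Mathlib

open Filter Topology MeasureTheory intervalIntegral Set

theorem stmt15
    (t₀ : ℝ) (ht₀ : 2 < t₀)
    (x x' : ℝ → ℝ)
    (hxc : ContinuousOn x (Set.Ici (t₀ - 1)))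
    (hx : ∀ t, t₀ ≤ t → HasDerivWithinAt x (x' t) (Set.Ici t₀) t)
    (hxeq : ∀ t, t₀ ≤ t → x' t = ∫ θ in (0:ℝ)..1, x (t - θ) / (t - θ)) :
    (∃ L : ℝ, Tendsto (fun t => x t / t) atTop (𝓝 L)) ∧
    (∃ y' : ℝ → ℝ,
      (∀ t, t₀ < t → HasDerivAt (fun u => x u / u) (y' t) t) ∧
      Tendsto y' atTop (𝓝 0)) ∧
    Tendsto (fun t => x' t / t) atTop (𝓝 0) := by
  have h0 : (0:ℝ) < t₀ - 1 := by linarith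
  -- global continuous extension of s ↦ x s / s
  set m : ℝ → ℝ := fun s => max s (t₀ - 1) with hm
  have hmc : Continuous m := continuous_id.max continuous_const
  have hmpos : ∀ s, 0 < m s := fun s => lt_of_lt_of_le h0 (le_max_right _ _)
  set h : ℝ → ℝ := fun s => x (m s) / m s with hhdef
  have hhc : Continuous h :=
    (hxc.comp_continuous hmc fun s => Set.mem_Ici.2 (le_max_right _ _)).div hmc fun s => (hmpos s).ne'
  have hheq : ∀ s, t₀ - 1 ≤ s → h s = x s / s := by
    intro s hs
    simp only [hhdef, hm, max_eq_left hs]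
  -- primitive of h
  set P : ℝ → ℝ := fun t => ∫ s in (0:ℝ)..t, h s with hPdef
  have hPd : ∀ t : ℝ, HasDerivAt P (h t) t := fun t =>
    (hhc.integral_hasStrictDerivAt 0 t).hasDerivAt
  have hPc : Continuous P := continuous_iff_continuousAt.2 fun t => (hPd t).continuousAt
  set F : ℝ → ℝ := fun t => P t - P (t - 1) with hFdef
  have hFeq : ∀ t : ℝ, F t = ∫ s in (t-1)..t, h s := by
    intro t
    simp only [hFdef, hPdef]
    exact integral_interval_sub_left (hhc.intervalIntegrable _ _) (hhc.intervalIntegrable _ _)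
  have hFc : Continuous F := hPc.sub (hPc.comp (continuous_id.sub continuous_const))
  set D : ℝ → ℝ := fun t => (F t - h t) / t with hDdef
  have hDc : ContinuousOn D (Set.Ici t₀) :=
    ((hFc.sub hhc).continuousOn.div continuousOn_id
      (fun t ht => ne_of_gt (by have := mem_Ici.1 ht; linarith)))
  -- x' = F on [t₀, ∞)
  have hx'F : ∀ t, t₀ ≤ t → x' t = F t := by
    intro t ht
    rw [hxeq t ht, hFeq t]
    have h1 : ∀ θ ∈ Set.uIcc (0:ℝ) 1, x (t - θ) / (t - θ) = h (t - θ) := by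
      intro θ hθ
      rw [Set.uIcc_of_le (by norm_num : (0:ℝ) ≤ 1)] at hθ
      exact (hheq (t - θ) (by have := hθ.2; linarith)).symm
    rw [intervalIntegral.integral_congr h1]
    have := intervalIntegral.integral_comp_sub_left h t (a := 0) (b := 1)
    simpa using this
  -- derivative of x u / u
  have hg : ∀ t, t₀ < t → HasDerivAt (fun u => x u / u) (D t) t := by
    intro t ht
    have htne : t ≠ 0 := by linarith
    have hxd : HasDerivAt x (x' t) t := (hx t ht.le).hasDerivAt (Ici_mem_nhds ht)
    have hdd := hxd.div (hasDerivAt_id t) htne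
    refine (hdd.congr_deriv ?_)
    symm
    simp only [hDdef]
    rw [← hx'F t ht.le, hheq t (by linarith)]
    field_simp
    simp only [id_eq]; rw [mul_div_cancel_left₀ _ (pow_ne_zero 2 htne)]
  have hhd : ∀ t, t₀ < t → HasDerivAt h (D t) t := by
    intro t ht
    refine (hg t ht).congr_of_eventuallyEq ?_
    filter_upwards [Ioi_mem_nhds (show t₀ - 1 < t by linarith)] with u hu
    exact hheq u (le_of_lt hu)
  -- FTC
  have hFTC : ∀ a b : ℝ, t₀ ≤ a → a ≤ b → ∫ u in a..b, D u = h b - h a := by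
    intro a b ha hab
    refine intervalIntegral.integral_eq_sub_of_hasDeriv_right_of_le hab hhc.continuousOn
      (fun u hu => (hhd u (lt_of_le_of_lt ha hu.1)).hasDerivWithinAt) ?_
    apply (hDc.mono ?_).intervalIntegrable
    rw [Set.uIcc_of_le hab]
    exact fun u hu => le_trans ha hu.1
  -- contraction
  have hcontr : ∀ t K : ℝ, t₀ + 1 ≤ t → 0 ≤ K →
      (∀ u, u ∈ Set.Icc (t-1) t → |D u| ≤ K) → |D t| ≤ K / 4 := by
    intro t K ht hK hbd
    have ht' : t₀ ≤ t - 1 := by linarith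
    have htpos : (0:ℝ) < t := by linarith
    have h1 : F t - h t = ∫ s in (t-1)..t, (h s - h t) := by
      rw [intervalIntegral.integral_sub (hhc.intervalIntegrable _ _)
        (intervalIntegrable_const), hFeq t, intervalIntegral.integral_const]
      simp
    have h2 : ∀ s ∈ Set.uIoc (t-1) t, ‖h s - h t‖ ≤ K * (t - s) := by
      intro s hs
      rw [Set.uIoc_of_le (by linarith : t - 1 ≤ t)] at hs
      have hst : s ≤ t := hs.2
      have hDs : ∫ u in s..t, D u = h t - h s := hFTC s t (by linarith [hs.1]) hst
      have hb : ∀ u ∈ Set.uIoc s t, ‖D u‖ ≤ K := by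
        intro u hu
        rw [Set.uIoc_of_le hst] at hu
        exact hbd u ⟨by linarith [hs.1, hu.1], hu.2⟩
      have := intervalIntegral.norm_integral_le_of_norm_le_const hb
      rw [hDs] at this
      calc ‖h s - h t‖ = ‖h t - h s‖ := by rw [norm_sub_rev]
        _ ≤ K * |t - s| := this
        _ = K * (t - s) := by rw [abs_of_nonneg (by linarith)]
    have h3 : ‖∫ s in (t-1)..t, (h s - h t)‖ ≤ |∫ s in (t-1)..t, K * (t - s)| := by
      refine le_trans (intervalIntegral.norm_integral_le_of_norm_le (by linarith) ?_ ?_) (le_abs_self _)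
      · exact Filter.Eventually.of_forall (fun s hs => h2 s (by rw [Set.uIoc_of_le (by linarith)]; exact hs))
      · exact ((continuous_const.mul (continuous_const.sub continuous_id)).intervalIntegrable _ _)
    have h4 : ∫ s in (t-1)..t, K * (t - s) = K / 2 := by
      rw [intervalIntegral.integral_const_mul]
      rw [intervalIntegral.integral_sub intervalIntegrable_const intervalIntegrable_id]
      rw [intervalIntegral.integral_const, integral_id]
      simp only [smul_eq_mul]
      ring
    rw [h4] at h3
    have h5 : |F t - h t| ≤ K / 2 := by
      rw [h1]
      calc |∫ s in (t-1)..t, (h s - h t)| ≤ |K / 2| := h3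
        _ = K / 2 := abs_of_nonneg (by linarith)
    simp only [hDdef]
    rw [abs_div, abs_of_pos htpos, div_le_iff₀ htpos]
    nlinarith
  -- maxima on unit intervals
  have hmax : ∀ n : ℕ, ∃ z ∈ Set.Icc (t₀ + (n:ℝ)) (t₀ + n + 1),
      ∀ u ∈ Set.Icc (t₀ + (n:ℝ)) (t₀ + n + 1), |D u| ≤ |D z| := by
    intro n
    have hsub : Set.Icc (t₀ + (n:ℝ)) (t₀ + n + 1) ⊆ Set.Ici t₀ := fun u hu => by
      have := hu.1; have : (0:ℝ) ≤ n := Nat.cast_nonneg n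
      simp only [Set.mem_Ici]; linarith [hu.1]
    obtain ⟨z, hz, hzmax⟩ := isCompact_Icc.exists_isMaxOn
      (Set.nonempty_Icc.2 (by linarith)) ((hDc.mono hsub).abs)
    exact ⟨z, hz, fun u hu => hzmax hu⟩
  choose z hzmem hzmax using hmax
  set M : ℕ → ℝ := fun n => |D (z n)| with hMdef
  have hM0 : ∀ n, 0 ≤ M n := fun n => abs_nonneg _
  have hMstep : ∀ n : ℕ, M (n+1) ≤ M n / 4 := by
    intro n
    have hz1 := hzmem (n+1)
    have hz1' : t₀ + (n:ℝ) + 1 ≤ z (n+1) ∧ z (n+1) ≤ t₀ + n + 2 := by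
      constructor
      · have := hz1.1; push_cast at this; linarith
      · have := hz1.2; push_cast at this; linarith
    have hn0 : (0:ℝ) ≤ n := Nat.cast_nonneg n
    have happ := hcontr (z (n+1)) (max (M n) (M (n+1))) (by linarith [hz1'.1])
      (le_max_of_le_left (hM0 n)) ?_
    · rcases le_total (M (n+1)) (M n) with hc | hc
      · rwa [max_eq_left hc] at happ
      · rw [max_eq_right hc] at happ
        have : M (n+1) ≤ 0 := by linarith
        linarith [hM0 n]
    · intro u hu
      rcases le_total u (t₀ + n + 1) with hcase | hcase
      · refine le_trans (hzmax n u ⟨?_, hcase⟩) (le_max_left _ _)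
        have := hu.1; linarith [hz1'.1]
      · refine le_trans (hzmax (n+1) u ⟨?_, ?_⟩) (le_max_right _ _)
        · push_cast; linarith
        · push_cast; linarith [hu.2, hz1'.2]
  have hMn : ∀ n : ℕ, M n ≤ M 0 / 4 ^ n := by
    intro n
    induction n with
    | zero => simp
    | succ n ih =>
      calc M (n+1) ≤ M n / 4 := hMstep n
        _ ≤ (M 0 / 4 ^ n) / 4 := by linarith
        _ = M 0 / 4 ^ (n+1) := by rw [div_div, ← pow_succ]
  -- pointwise bound
  have hpt : ∀ t, t₀ ≤ t → |D t| ≤ M 0 / 4 ^ (⌊t - t₀⌋₊) := by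
    intro t ht
    have h1 : (⌊t - t₀⌋₊ : ℝ) ≤ t - t₀ := Nat.floor_le (by linarith)
    have h2 : t - t₀ < ⌊t - t₀⌋₊ + 1 := Nat.lt_floor_add_one _
    exact le_trans (hzmax _ t ⟨by linarith, by linarith⟩) (hMn _)
  -- D → 0
  have hfloor : Tendsto (fun t : ℝ => ⌊t - t₀⌋₊) atTop atTop := by
    apply tendsto_nat_floor_atTop.comp
    exact (tendsto_atTop_add_const_right atTop (-t₀) tendsto_id).congr
      (fun t => by simp [sub_eq_add_neg])
  have hb0 : Tendsto (fun t : ℝ => M 0 / 4 ^ ⌊t - t₀⌋₊) atTop (𝓝 0) := by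
    have hn : Tendsto (fun n : ℕ => M 0 / 4 ^ n) atTop (𝓝 0) := by
      have := (tendsto_pow_atTop_nhds_zero_of_lt_one (by norm_num : (0:ℝ) ≤ 1/4)
        (by norm_num : (1/4:ℝ) < 1)).const_mul (M 0)
      simpa [div_eq_mul_inv, inv_pow] using this
    exact hn.comp hfloor
  have hD0 : Tendsto D atTop (𝓝 0) := by
    have hneg : Tendsto (fun t : ℝ => -(M 0 / 4 ^ ⌊t - t₀⌋₊)) atTop (𝓝 0) := by
      simpa using hb0.neg
    refine tendsto_of_tendsto_of_tendsto_of_le_of_le' hneg hb0 ?_ ?_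
    · filter_upwards [eventually_ge_atTop t₀] with t ht
      linarith [abs_le.1 (hpt t ht) |>.1]
    · filter_upwards [eventually_ge_atTop t₀] with t ht
      linarith [abs_le.1 (hpt t ht) |>.2]
  -- integrability of D on Ioi t₀
  set c : ℝ := Real.log 4 with hcdef
  have hc : 0 < c := Real.log_pos (by norm_num)
  have hexpc : Real.exp c = 4 := Real.exp_log (by norm_num)
  have hbound : ∀ t, t₀ ≤ t → |D t| ≤ (4 * M 0 * Real.exp (c * t₀)) * Real.exp (-c * t) := by
    intro t ht
    refine (hpt t ht).trans ?_
    set n := ⌊t - t₀⌋₊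
    have h1 : (n:ℝ) ≤ t - t₀ := Nat.floor_le (by linarith)
    have h2 : t - t₀ < (n:ℝ) + 1 := Nat.lt_floor_add_one _
    have h4 : (4:ℝ) ^ n = Real.exp (c * n) := by
      rw [← hexpc, ← Real.exp_nat_mul]
      ring_nf
    rw [h4, div_eq_mul_inv, ← Real.exp_neg]
    have hle : -(c * n) ≤ c + c * t₀ + (-c * t) := by
      have : t - t₀ - 1 ≤ (n:ℝ) := by linarith
      nlinarith
    calc M 0 * Real.exp (-(c * n)) ≤ M 0 * Real.exp (c + c * t₀ + (-c * t)) :=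
        mul_le_mul_of_nonneg_left (Real.exp_le_exp.2 hle) (hM0 0)
      _ = (4 * M 0 * Real.exp (c * t₀)) * Real.exp (-c * t) := by
        rw [Real.exp_add, Real.exp_add, hexpc]; ring
  have hDint : IntegrableOn D (Set.Ioi t₀) := by
    have hφ : IntegrableOn (fun t => (4 * M 0 * Real.exp (c * t₀)) * Real.exp (-c * t))
        (Set.Ioi t₀) := (exp_neg_integrableOn_Ioi t₀ hc).const_mul _
    refine hφ.integrable.mono ((hDc.mono Ioi_subset_Ici_self).aestronglyMeasurable
      measurableSet_Ioi) ?_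
    refine (ae_restrict_iff' measurableSet_Ioi).2 (Filter.Eventually.of_forall ?_)
    intro t ht
    rw [Real.norm_eq_abs, Real.norm_eq_abs]
    exact (hbound t (le_of_lt ht)).trans (le_abs_self _)
  -- limit of h
  set L : ℝ := h t₀ + ∫ u in Set.Ioi t₀, D u with hLdef
  have h3 : Tendsto (fun t => ∫ u in t₀..t, D u) atTop (𝓝 (∫ u in Set.Ioi t₀, D u)) :=
    intervalIntegral_tendsto_integral_Ioi t₀ hDint tendsto_id
  have hhL : Tendsto h atTop (𝓝 L) := by
    refine Tendsto.congr' ?_ (tendsto_const_nhds.add h3)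
    filter_upwards [eventually_ge_atTop t₀] with t ht
    rw [hFTC t₀ t le_rfl ht]; ring
  have hgoal1 : Tendsto (fun t => x t / t) atTop (𝓝 L) := by
    refine Tendsto.congr' ?_ hhL
    filter_upwards [eventually_ge_atTop (t₀ - 1)] with t ht
    exact hheq t ht
  refine ⟨⟨L, hgoal1⟩, ⟨D, hg, hD0⟩, ?_⟩
  -- x'/t → 0
  have : Tendsto (fun t => D t + h t / t) atTop (𝓝 (0 + 0)) :=
    hD0.add (hhL.div_atTop tendsto_id)
  rw [add_zero] at this
  refine Tendsto.congr' ?_ this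
  filter_upwards [eventually_ge_atTop t₀] with t ht
  have htpos : (0:ℝ) < t := by linarith
  rw [hx'F t ht]
  simp only [hDdef]
  field_simp
  ring
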